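/- There exists a universal constant C > 0 such that the following holds. Let n be a positive integer, let v_1,…,v_n ∈ {−1,+1}^n be pairwise orthogonal vectors with v_1 the all-ones vector, and set S_i = {j : v_i(j) = +1}. Let Δ ≥ 0 and let f be a Δ-linear set function over n items. Define the linear set function h by h(S) = f(∅) + ∑_{j∈S} h_j, where h_j = (1/n) ∑_{i=1}^n v_i(j)·(f(S_i) − f(U∖S_i)). Then for every set S ⊆ U, |h(S) − f(S)| ≤ CΔ·(1 + √(min{|S|, n−|S|})); in particular h is CΔ√n-close to f. (Note that h is computed from the 2n+1 values f(∅) and f(S_i), f(U∖S_i) for i = 1,…,n, i.e., from O(n) nonadaptive value queries to f.) -/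

import Mathlib

open Finset Matrix

/-- `f` is linear: `f(S) = c₀ + ∑_{i ∈ S} cᵢ` for some constants. -/
def IsLinear {n : ℕ} (f : Finset (Fin n) → ℝ) : Prop :=
  ∃ (c₀ : ℝ) (c : Fin n → ℝ), ∀ S : Finset (Fin n), f S = c₀ + ∑ i ∈ S, c i

/-- `f` is Δ-linear: there is a linear function within additive distance Δ of `f`. -/
def IsCloseLinear {n : ℕ} (f : Finset (Fin n) → ℝ) (Δ : ℝ) : Prop :=
  ∃ g : Finset (Fin n) → ℝ, IsLinear g ∧ ∀ S : Finset (Fin n), |f S - g S| ≤ Δ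

/-- The set of coordinates where the vector `v i ∈ {±1}ⁿ` equals +1. -/
noncomputable def posSet {n : ℕ} (v : Fin n → Fin n → ℝ) (i : Fin n) : Finset (Fin n) :=
  Finset.univ.filter (fun j => v i j = 1)

lemma col_orth {n : ℕ} (hn : 0 < n) (v : Fin n → Fin n → ℝ)
    (hv : ∀ i j, v i j = 1 ∨ v i j = -1)
    (horth : ∀ i i', i ≠ i' → ∑ j, v i j * v i' j = 0) :
    ∀ j k : Fin n, ∑ i, v i j * v i k = if j = k then (n : ℝ) else 0 := by
  have hN : (0:ℝ) < n := by exact_mod_cast hn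
  have hsq : ∀ i j, v i j * v i j = 1 := by
    intro i j; rcases hv i j with h | h <;> rw [h] <;> ring
  set M : Matrix (Fin n) (Fin n) ℝ := Matrix.of v with hM
  have h1 : M * Mᵀ = (n : ℝ) • 1 := by
    ext i i'
    by_cases h : i = i'
    · subst h
      simp [Matrix.mul_apply, Matrix.transpose_apply, Matrix.one_apply, hM, hsq]
    · simp [Matrix.mul_apply, Matrix.transpose_apply, Matrix.one_apply, hM, h, horth i i' h]
  have h2 : ((n:ℝ)⁻¹ • M) * Mᵀ = 1 := by
    rw [Matrix.smul_mul, h1, smul_smul, inv_mul_cancel₀ hN.ne', one_smul]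
  have h3 : Mᵀ * ((n:ℝ)⁻¹ • M) = 1 := mul_eq_one_comm.mp h2
  have h4 : Mᵀ * M = (n:ℝ) • 1 := by
    have := congrArg (fun A => (n:ℝ) • A) h3
    simpa [Matrix.mul_smul, smul_smul, mul_inv_cancel₀ hN.ne'] using this
  intro j k
  have := congrFun (congrFun h4 j) k
  simpa [Matrix.mul_apply, Matrix.transpose_apply, Matrix.one_apply, hM, mul_comm] using this

lemma sum_sq_rowsum {n : ℕ} (v : Fin n → Fin n → ℝ)
    (hcol : ∀ j k : Fin n, ∑ i, v i j * v i k = if j = k then (n : ℝ) else 0)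
    (T : Finset (Fin n)) :
    ∑ i, (∑ j ∈ T, v i j) ^ 2 = (n : ℝ) * T.card := by
  have : ∀ i : Fin n, (∑ j ∈ T, v i j) ^ 2 = ∑ j ∈ T, ∑ k ∈ T, v i j * v i k := by
    intro i; rw [sq, Finset.sum_mul_sum]
  rw [Finset.sum_congr rfl fun i _ => this i]
  rw [Finset.sum_comm]
  have : ∀ j ∈ T, ∑ i : Fin n, ∑ k ∈ T, v i j * v i k = (n : ℝ) := by
    intro j hj
    rw [Finset.sum_comm]
    rw [Finset.sum_congr rfl fun k _ => hcol j k]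
    simp [hj]
  rw [Finset.sum_congr rfl this]
  simp [mul_comm]

/-- The Hadamard-based learning algorithm: for some universal constant `C > 0`, given a
Hadamard basis `v₁, …, vₙ` with `v₁` the all-ones vector and a Δ-linear function `f`, the
linear function `h(S) = f(∅) + ∑_{j∈S} hⱼ` with
`hⱼ = (1/n) ∑ᵢ vᵢ(j)(f(Sᵢ) − f(U∖Sᵢ))` satisfies
`|h(S) − f(S)| ≤ CΔ(1 + √(min(|S|, n−|S|)))` for every set `S`. -/
theorem hadamard_learning :
    ∃ C : ℝ, 0 < C ∧
      ∀ (n : ℕ) (hn : 0 < n) (v : Fin n → Fin n → ℝ),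
        (∀ i j : Fin n, v i j = 1 ∨ v i j = -1) →
        (∀ i i' : Fin n, i ≠ i' → ∑ j : Fin n, v i j * v i' j = 0) →
        (∀ j : Fin n, v ⟨0, hn⟩ j = 1) →
        ∀ (Δ : ℝ), 0 ≤ Δ →
        ∀ f : Finset (Fin n) → ℝ, IsCloseLinear f Δ →
        ∀ S : Finset (Fin n),
          |(f ∅ + ∑ j ∈ S, (1 / n) * ∑ i : Fin n,
              v i j * (f (posSet v i) - f (Finset.univ \ posSet v i))) - f S|
            ≤ C * Δ * (1 + Real.sqrt (min S.card (n - S.card))) := by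
  refine ⟨4, by norm_num, ?_⟩
  intro n hn v hv horth hone Δ hΔ f hf S
  obtain ⟨g, ⟨c₀, c, hg⟩, hfg⟩ := hf
  have hN : (0:ℝ) < n := by exact_mod_cast hn
  have hcol := col_orth hn v hv horth
  set z : Fin n := ⟨0, hn⟩ with hz
  set e : Fin n → ℝ :=
    fun i => (f (posSet v i) - f (Finset.univ \ posSet v i)) - ∑ k, v i k * c k with he
  -- e is small
  have hebound : ∀ i, |e i| ≤ 2 * Δ := by
    intro i
    have hsplit : ∑ k, v i k * c k
        = (∑ k ∈ posSet v i, c k) - ∑ k ∈ Finset.univ \ posSet v i, c k := by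
      have hp : ∀ k ∈ posSet v i, v i k * c k = c k := by
        intro k hk
        have : v i k = 1 := by simpa [posSet] using hk
        rw [this, one_mul]
      have hm : ∀ k ∈ Finset.univ \ posSet v i, v i k * c k = -c k := by
        intro k hk
        have h2 : ¬ (v i k = 1) := by
          simp [posSet] at hk; exact hk
        have : v i k = -1 := (hv i k).resolve_left h2
        rw [this]; ring
      rw [← Finset.sum_sdiff (Finset.subset_univ (posSet v i)),
        Finset.sum_congr rfl hp, Finset.sum_congr rfl hm, Finset.sum_neg_distrib]
      ring
    have heq : e i = (f (posSet v i) - g (posSet v i))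
        - (f (Finset.univ \ posSet v i) - g (Finset.univ \ posSet v i)) := by
      rw [he]; simp only []
      rw [hsplit, hg, hg]; ring
    calc |e i| ≤ |f (posSet v i) - g (posSet v i)|
        + |f (Finset.univ \ posSet v i) - g (Finset.univ \ posSet v i)| := by
          rw [heq]; exact abs_sub _ _
      _ ≤ Δ + Δ := add_le_add (hfg _) (hfg _)
      _ = 2 * Δ := by ring
  -- the key identity for each column j
  have key : ∀ j, ∑ i, v i j * (f (posSet v i) - f (Finset.univ \ posSet v i))
      = (n : ℝ) * c j + ∑ i, v i j * e i := by
    intro j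
    have : ∀ i : Fin n, v i j * (f (posSet v i) - f (Finset.univ \ posSet v i))
        = v i j * (∑ k, v i k * c k) + v i j * e i := by
      intro i; rw [he]; ring
    rw [Finset.sum_congr rfl fun i _ => this i, Finset.sum_add_distrib]
    congr 1
    have hsw : ∑ i, v i j * ∑ k, v i k * c k = ∑ k, (∑ i, v i j * v i k) * c k := by
      simp_rw [Finset.mul_sum, ← mul_assoc, Finset.sum_mul]
      rw [Finset.sum_comm]
    rw [hsw]
    have : ∀ k : Fin n, (∑ i, v i j * v i k) * c k = (if j = k then (n:ℝ) else 0) * c k := by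
      intro k; rw [hcol j k]
    rw [Finset.sum_congr rfl fun k _ => this k]
    simp
  -- abbreviations
  set a : Fin n → ℝ := fun i => ∑ j ∈ S, v i j with ha
  set m : ℝ := ((min S.card (n - S.card) : ℕ) : ℝ) with hm
  have hm0 : 0 ≤ m := by positivity
  have hsqm : 0 ≤ Real.sqrt m := Real.sqrt_nonneg m
  -- rewrite the estimator sum
  have hsum : ∑ j ∈ S, (1/(n:ℝ)) * ∑ i, v i j * (f (posSet v i) - f (Finset.univ \ posSet v i))
      = (∑ j ∈ S, c j) + (1/(n:ℝ)) * ∑ i, a i * e i := by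
    have h1 : ∀ j ∈ S, (1/(n:ℝ)) * ∑ i, v i j * (f (posSet v i) - f (Finset.univ \ posSet v i))
        = c j + (1/(n:ℝ)) * ∑ i, v i j * e i := by
      intro j _
      rw [key j]
      field_simp
    rw [Finset.sum_congr rfl h1, Finset.sum_add_distrib]
    congr 1
    rw [← Finset.mul_sum]
    congr 1
    rw [Finset.sum_comm]
    exact Finset.sum_congr rfl fun i _ => (Finset.sum_mul _ _ _).symm
  -- identity for the error
  have hid : (f ∅ + ∑ j ∈ S, (1/(n:ℝ)) * ∑ i, v i j *
        (f (posSet v i) - f (Finset.univ \ posSet v i))) - f S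
      = (f ∅ - g ∅) + (g S - f S) + (1/(n:ℝ)) * ∑ i, a i * e i := by
    rw [hsum, hg S, hg ∅]
    simp
    ring
  -- bounds on a
  have haz : a z = (S.card : ℝ) := by
    simp [ha, hone]
  have hrow : ∀ i : Fin n, i ≠ z → ∑ j, v i j = 0 := by
    intro i hi
    have := horth i z hi
    simpa [hone] using this
  have hab : ∀ i : Fin n, i ≠ z → a i = -(∑ j ∈ Finset.univ \ S, v i j) := by
    intro i hi
    have h1 : (∑ j ∈ Finset.univ \ S, v i j) + ∑ j ∈ S, v i j = ∑ j, v i j :=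
      Finset.sum_sdiff (Finset.subset_univ S)
    rw [hrow i hi] at h1
    have h2 : a i = ∑ j ∈ S, v i j := rfl
    rw [h2]
    linarith
  have hA : ∑ i, a i ^ 2 = (n : ℝ) * S.card := sum_sq_rowsum v hcol S
  have hB : ∑ i, (∑ j ∈ Finset.univ \ S, v i j) ^ 2 = (n : ℝ) * ((n : ℕ) - S.card : ℕ) := by
    have := sum_sq_rowsum v hcol (Finset.univ \ S)
    rwa [Finset.card_sdiff_of_subset (Finset.subset_univ S), Finset.card_univ, Fintype.card_fin] at this
  -- sum of squares over i ≠ z bounded by n * m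
  have herase : ∑ i ∈ Finset.univ.erase z, a i ^ 2 ≤ (n : ℝ) * m := by
    have hle1 : ∑ i ∈ Finset.univ.erase z, a i ^ 2 ≤ (n : ℝ) * S.card := by
      rw [← hA]
      exact Finset.sum_le_sum_of_subset_of_nonneg (Finset.erase_subset _ _)
        (fun i _ _ => sq_nonneg _)
    have hle2 : ∑ i ∈ Finset.univ.erase z, a i ^ 2 ≤ (n : ℝ) * ((n : ℕ) - S.card : ℕ) := by
      have heq : ∀ i ∈ Finset.univ.erase z, a i ^ 2 = (∑ j ∈ Finset.univ \ S, v i j) ^ 2 := by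
        intro i hi
        rw [hab i (Finset.ne_of_mem_erase hi)]
        ring
      rw [Finset.sum_congr rfl heq, ← hB]
      exact Finset.sum_le_sum_of_subset_of_nonneg (Finset.erase_subset _ _)
        (fun i _ _ => sq_nonneg _)
    have : (n : ℝ) * m = min ((n : ℝ) * S.card) ((n : ℝ) * ((n : ℕ) - S.card : ℕ)) := by
      rw [hm, Nat.cast_min]
      exact mul_min_of_nonneg _ _ hN.le
    rw [this]
    exact le_min hle1 hle2
  -- Cauchy-Schwarz on the erased sum
  have hCS : ∑ i ∈ Finset.univ.erase z, |a i| ≤ (n : ℝ) * Real.sqrt m := by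
    have h1 : (∑ i ∈ Finset.univ.erase z, |a i|) ^ 2
        ≤ (∑ i ∈ Finset.univ.erase z, (1:ℝ) ^ 2) * ∑ i ∈ Finset.univ.erase z, |a i| ^ 2 := by
      have := Finset.sum_mul_sq_le_sq_mul_sq (Finset.univ.erase z)
        (fun _ => (1:ℝ)) (fun i => |a i|)
      simpa using this
    have h2 : (∑ i ∈ Finset.univ.erase z, (1:ℝ) ^ 2) ≤ (n : ℝ) := by
      simp only [one_pow, Finset.sum_const, nsmul_eq_mul, mul_one]
      have : (Finset.univ.erase z).card ≤ n := by
        calc (Finset.univ.erase z).card ≤ (Finset.univ : Finset (Fin n)).card :=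
              Finset.card_le_card (Finset.erase_subset _ _)
          _ = n := by simp
      exact_mod_cast this
    have h3 : ∑ i ∈ Finset.univ.erase z, |a i| ^ 2 ≤ (n : ℝ) * m := by
      have : ∀ i ∈ Finset.univ.erase z, |a i| ^ 2 = a i ^ 2 := fun i _ => sq_abs _
      rw [Finset.sum_congr rfl this]
      exact herase
    have h4 : (∑ i ∈ Finset.univ.erase z, |a i|) ^ 2 ≤ (n : ℝ) ^ 2 * m := by
      calc (∑ i ∈ Finset.univ.erase z, |a i|) ^ 2
          ≤ (∑ i ∈ Finset.univ.erase z, (1:ℝ) ^ 2) * ∑ i ∈ Finset.univ.erase z, |a i| ^ 2 := h1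
        _ ≤ (n : ℝ) * ((n : ℝ) * m) := by
            apply mul_le_mul h2 h3 (Finset.sum_nonneg fun i _ => sq_nonneg _) hN.le
        _ = (n : ℝ) ^ 2 * m := by ring
    have h5 : 0 ≤ ∑ i ∈ Finset.univ.erase z, |a i| :=
      Finset.sum_nonneg fun i _ => abs_nonneg _
    calc ∑ i ∈ Finset.univ.erase z, |a i|
        = Real.sqrt ((∑ i ∈ Finset.univ.erase z, |a i|) ^ 2) := (Real.sqrt_sq h5).symm
      _ ≤ Real.sqrt ((n : ℝ) ^ 2 * m) := Real.sqrt_le_sqrt h4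
      _ = (n : ℝ) * Real.sqrt m := by
          rw [Real.sqrt_mul (sq_nonneg _), Real.sqrt_sq hN.le]
  -- bound the error sum
  have herr : |∑ i, a i * e i| ≤ 2 * Δ * ((S.card : ℝ) + (n : ℝ) * Real.sqrt m) := by
    calc |∑ i, a i * e i| ≤ ∑ i, |a i * e i| := Finset.abs_sum_le_sum_abs _ _
      _ ≤ ∑ i, |a i| * (2 * Δ) := by
          apply Finset.sum_le_sum
          intro i _
          rw [abs_mul]
          exact mul_le_mul_of_nonneg_left (hebound i) (abs_nonneg _)
      _ = (|a z| + ∑ i ∈ Finset.univ.erase z, |a i|) * (2 * Δ) := by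
          rw [← Finset.sum_mul]
          congr 1
          exact (Finset.add_sum_erase _ _ (Finset.mem_univ z)).symm
      _ ≤ ((S.card : ℝ) + (n : ℝ) * Real.sqrt m) * (2 * Δ) := by
          apply mul_le_mul_of_nonneg_right _ (by linarith)
          have : |a z| = (S.card : ℝ) := by rw [haz]; exact abs_of_nonneg (by positivity)
          rw [this]
          linarith [hCS]
      _ = 2 * Δ * ((S.card : ℝ) + (n : ℝ) * Real.sqrt m) := by ring
  -- final assembly
  have hcard : (S.card : ℝ) ≤ (n : ℝ) := by
    have : S.card ≤ n := by
      calc S.card ≤ (Finset.univ : Finset (Fin n)).card := Finset.card_le_card (Finset.subset_univ S)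
        _ = n := by simp
    exact_mod_cast this
  have hcardn : S.card ≤ n := by
    calc S.card ≤ (Finset.univ : Finset (Fin n)).card := Finset.card_le_card (Finset.subset_univ S)
      _ = n := by simp
  have hmin : Real.sqrt (min (S.card : ℝ) ((n : ℝ) - (S.card : ℝ))) = Real.sqrt m := by
    rw [hm, Nat.cast_min, Nat.cast_sub hcardn]
  rw [hid]
  calc |f ∅ - g ∅ + (g S - f S) + 1 / (n:ℝ) * ∑ i, a i * e i|
      ≤ |f ∅ - g ∅| + |g S - f S| + |1 / (n:ℝ) * ∑ i, a i * e i| := by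
        exact (abs_add_le _ _).trans (add_le_add_left (abs_add_le _ _) _)
    _ ≤ Δ + Δ + (1 / (n:ℝ)) * (2 * Δ * ((S.card : ℝ) + (n : ℝ) * Real.sqrt m)) := by
        have h6 : |g S - f S| ≤ Δ := by rw [abs_sub_comm]; exact hfg S
        have h7 : |1 / (n:ℝ) * ∑ i, a i * e i|
            = (1 / (n:ℝ)) * |∑ i, a i * e i| := by
          rw [abs_mul, abs_of_nonneg (by positivity : (0:ℝ) ≤ 1 / (n:ℝ))]
        exact add_le_add (add_le_add (hfg ∅) h6)
          (h7.le.trans (mul_le_mul_of_nonneg_left herr (by positivity)))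
    _ ≤ 4 * Δ * (1 + Real.sqrt m) := by
        have hexp : (1 / (n:ℝ)) * (2 * Δ * ((S.card : ℝ) + (n : ℝ) * Real.sqrt m))
            = 2 * Δ * (S.card : ℝ) / (n : ℝ) + 2 * Δ * Real.sqrt m := by
          field_simp
        rw [hexp]
        have h8 : 2 * Δ * (S.card : ℝ) / (n : ℝ) ≤ 2 * Δ := by
          rw [div_le_iff₀ hN]
          nlinarith
        nlinarith [mul_nonneg hΔ hsqm]
    _ ≤ 4 * Δ * (1 + Real.sqrt (min (S.card : ℝ) ((n : ℝ) - (S.card : ℝ)))) := by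
        rw [hmin]
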